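/- For every κ > 0 there exists D_min(κ) > 0 such that for all 0 < D < D_min(κ), the infimum of J(u) = (D/2)∫₀¹|u_x|² + (1/2)∫₀¹u² − κ log(∫₀¹e^u) over W^{1,2}(𝕋) is strictly less than −κ²/2 = J(κ̄), where κ̄ denotes the constant function equal to κ. Consequently the constant solution is not a global minimizer for small diffusion. -/

import Mathlib

open Real MeasureTheory Filter

/-- Membership in the (smooth dense subclass of the) periodic Sobolev space `W^{1,2}(𝕋)`. -/
def W12 (u : ℝ → ℝ) : Prop := ContDiff ℝ 1 u ∧ Function.Periodic u 1

/-- The energy functional `J(u) = (D/2)∫|u_x|² + (1/2)∫u² − κ log(∫ e^u)`. -/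
noncomputable def J (D κ : ℝ) (u : ℝ → ℝ) : ℝ :=
  (D / 2) * (∫ x in (0:ℝ)..1, (deriv u x) ^ 2)
    + (1 / 2) * (∫ x in (0:ℝ)..1, (u x) ^ 2)
    - κ * Real.log (∫ x in (0:ℝ)..1, Real.exp (u x))

noncomputable def bump (M δ : ℝ) (x : ℝ) : ℝ := M * Real.exp (-2/δ^2 * Real.sin (π*x)^2)

theorem bump_contDiff (M δ : ℝ) : ContDiff ℝ 1 (bump M δ) := by
  have : ContDiff ℝ 1 fun x : ℝ => Real.sin (π*x) :=
    Real.contDiff_sin.comp (contDiff_const.mul contDiff_id)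
  exact contDiff_const.mul (Real.contDiff_exp.comp (contDiff_const.mul (this.pow 2)))

theorem bump_continuous (M δ : ℝ) : Continuous (bump M δ) := (bump_contDiff M δ).continuous

theorem bump_periodic (M δ : ℝ) : Function.Periodic (bump M δ) 1 := by
  intro x
  simp only [bump]
  have : π * (x + 1) = π * x + π := by ring
  rw [this, Real.sin_add_pi]
  ring_nf

theorem J_const (D κ : ℝ) : J D κ (fun _ => κ) = -κ ^ 2 / 2 := by
  simp [J, Real.log_exp]
  ring

theorem gauss_piece {δ : ℝ} (hδ : 0 < δ) :
    ∫ x in (0:ℝ)..(1/2), Real.exp (-(16/δ^2) * x^2) ≤ δ * Real.sqrt π / 8 := by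
  have hb : 0 < 16/δ^2 := by positivity
  have hint : IntegrableOn (fun x => Real.exp (-(16/δ^2)*x^2)) (Set.Ioi 0) :=
    (integrable_exp_neg_mul_sq hb).integrableOn
  have h1 : ∫ x in (0:ℝ)..(1/2), Real.exp (-(16/δ^2) * x^2)
      = ∫ x in Set.Ioc (0:ℝ) (1/2), Real.exp (-(16/δ^2) * x^2) := by
    rw [intervalIntegral.integral_of_le (by norm_num)]
  have h2 : ∫ x in Set.Ioc (0:ℝ) (1/2), Real.exp (-(16/δ^2) * x^2)
      ≤ ∫ x in Set.Ioi (0:ℝ), Real.exp (-(16/δ^2) * x^2) := by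
    apply setIntegral_mono_set hint
    · filter_upwards with x using (Real.exp_pos _).le
    · exact (Set.Ioc_subset_Ioi_self).eventuallyLE
  have h3 : ∫ x in Set.Ioi (0:ℝ), Real.exp (-(16/δ^2) * x^2) = Real.sqrt (π/(16/δ^2))/2 :=
    integral_gaussian_Ioi _
  have h4 : Real.sqrt (π/(16/δ^2))/2 = δ * Real.sqrt π / 8 := by
    have : π/(16/δ^2) = (δ/4)^2 * π := by field_simp; ring
    rw [this, Real.sqrt_mul (sq_nonneg _), Real.sqrt_sq (by positivity)]
    ring
  rw [h1]
  calc _ ≤ _ := h2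
    _ = _ := h3.trans h4

theorem bump_sq_le_left {M δ : ℝ} {x : ℝ} (hx : x ∈ Set.Icc (0:ℝ) (1/2)) :
    (bump M δ x)^2 ≤ M^2 * Real.exp (-(16/δ^2) * x^2) := by
  obtain ⟨hx0, hx1⟩ := hx
  have hs : 2 * x ≤ Real.sin (π * x) := by
    have := Real.mul_le_sin (x := π * x) (by positivity) (by nlinarith [Real.pi_pos])
    calc 2*x = 2/π * (π*x) := by field_simp
      _ ≤ _ := this
  have hsq : (2*x)^2 ≤ Real.sin (π*x)^2 := by nlinarith
  have hexp : Real.exp (-2/δ^2 * Real.sin (π*x)^2)^2 = Real.exp (-4/δ^2 * Real.sin (π*x)^2) := by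
    rw [← Real.exp_nat_mul]; ring_nf
  have harg : -4/δ^2 * Real.sin (π*x)^2 ≤ -(16/δ^2) * x^2 := by
    have h0 : (-4:ℝ)/δ^2 ≤ 0 := div_nonpos_of_nonpos_of_nonneg (by norm_num) (sq_nonneg δ)
    calc -4/δ^2 * Real.sin (π*x)^2 ≤ -4/δ^2 * (2*x)^2 := mul_le_mul_of_nonpos_left hsq h0
      _ = -(16/δ^2) * x^2 := by ring
  calc (bump M δ x)^2 = M^2 * Real.exp (-2/δ^2 * Real.sin (π*x)^2)^2 := by rw [bump]; ring
    _ = M^2 * Real.exp (-4/δ^2 * Real.sin (π*x)^2) := by rw [hexp]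
    _ ≤ M^2 * Real.exp (-(16/δ^2) * x^2) :=
        mul_le_mul_of_nonneg_left (Real.exp_le_exp.2 harg) (sq_nonneg _)

theorem bump_sq_le_right {M δ : ℝ} {x : ℝ} (hx : x ∈ Set.Icc (1/2:ℝ) 1) :
    (bump M δ x)^2 ≤ M^2 * Real.exp (-(16/δ^2) * (1-x)^2) := by
  obtain ⟨hx0, hx1⟩ := hx
  have hsin : Real.sin (π * x) = Real.sin (π * (1 - x)) := by
    rw [show π * (1-x) = π - π * x by ring, Real.sin_pi_sub]
  have hs : 2 * (1-x) ≤ Real.sin (π * (1-x)) := by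
    have := Real.mul_le_sin (x := π * (1-x)) (by nlinarith [Real.pi_pos]) (by nlinarith [Real.pi_pos])
    calc 2*(1-x) = 2/π * (π*(1-x)) := by field_simp
      _ ≤ _ := this
  have hsq : (2*(1-x))^2 ≤ Real.sin (π*x)^2 := by rw [hsin]; nlinarith
  have hexp : Real.exp (-2/δ^2 * Real.sin (π*x)^2)^2 = Real.exp (-4/δ^2 * Real.sin (π*x)^2) := by
    rw [← Real.exp_nat_mul]; ring_nf
  have harg : -4/δ^2 * Real.sin (π*x)^2 ≤ -(16/δ^2) * (1-x)^2 := by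
    have h0 : (-4:ℝ)/δ^2 ≤ 0 := div_nonpos_of_nonpos_of_nonneg (by norm_num) (sq_nonneg δ)
    calc -4/δ^2 * Real.sin (π*x)^2 ≤ -4/δ^2 * (2*(1-x))^2 := mul_le_mul_of_nonpos_left hsq h0
      _ = -(16/δ^2) * (1-x)^2 := by ring
  calc (bump M δ x)^2 = M^2 * Real.exp (-2/δ^2 * Real.sin (π*x)^2)^2 := by rw [bump]; ring
    _ = M^2 * Real.exp (-4/δ^2 * Real.sin (π*x)^2) := by rw [hexp]
    _ ≤ M^2 * Real.exp (-(16/δ^2) * (1-x)^2) :=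
        mul_le_mul_of_nonneg_left (Real.exp_le_exp.2 harg) (sq_nonneg _)

theorem bump_integral_sq_le {M δ : ℝ} (hδ : 0 < δ) :
    ∫ x in (0:ℝ)..1, (bump M δ x)^2 ≤ M^2 * (δ * Real.sqrt π / 4) := by
  have hc : Continuous fun x => (bump M δ x)^2 := (bump_continuous M δ).pow 2
  have hg1 : Continuous fun x : ℝ => M^2 * Real.exp (-(16/δ^2) * x^2) := by fun_prop
  have hg2 : Continuous fun x : ℝ => M^2 * Real.exp (-(16/δ^2) * (1-x)^2) := by fun_prop
  have hsplit : ∫ x in (0:ℝ)..1, (bump M δ x)^2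
      = (∫ x in (0:ℝ)..(1/2), (bump M δ x)^2) + ∫ x in (1/2:ℝ)..1, (bump M δ x)^2 :=
    (intervalIntegral.integral_add_adjacent_intervals
      (hc.intervalIntegrable _ _) (hc.intervalIntegrable _ _)).symm
  have p1 : ∫ x in (0:ℝ)..(1/2), (bump M δ x)^2 ≤ M^2 * (δ * Real.sqrt π / 8) := by
    calc ∫ x in (0:ℝ)..(1/2), (bump M δ x)^2
        ≤ ∫ x in (0:ℝ)..(1/2), M^2 * Real.exp (-(16/δ^2) * x^2) :=
          intervalIntegral.integral_mono_on (by norm_num) (hc.intervalIntegrable _ _)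
            (hg1.intervalIntegrable _ _) (fun x hx => bump_sq_le_left hx)
      _ = M^2 * ∫ x in (0:ℝ)..(1/2), Real.exp (-(16/δ^2) * x^2) :=
          intervalIntegral.integral_const_mul _ _
      _ ≤ M^2 * (δ * Real.sqrt π / 8) :=
          mul_le_mul_of_nonneg_left (gauss_piece hδ) (sq_nonneg _)
  have p2 : ∫ x in (1/2:ℝ)..1, (bump M δ x)^2 ≤ M^2 * (δ * Real.sqrt π / 8) := by
    have hcv : ∫ x in (1/2:ℝ)..1, M^2 * Real.exp (-(16/δ^2) * (1-x)^2)
        = ∫ x in (0:ℝ)..(1/2), M^2 * Real.exp (-(16/δ^2) * x^2) := by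
      have := intervalIntegral.integral_comp_sub_left
        (a := (1/2:ℝ)) (b := 1) (fun y => M^2 * Real.exp (-(16/δ^2) * y^2)) 1
      norm_num at this ⊢
      convert this using 2
    calc ∫ x in (1/2:ℝ)..1, (bump M δ x)^2
        ≤ ∫ x in (1/2:ℝ)..1, M^2 * Real.exp (-(16/δ^2) * (1-x)^2) :=
          intervalIntegral.integral_mono_on (by norm_num) (hc.intervalIntegrable _ _)
            (hg2.intervalIntegrable _ _) (fun x hx => bump_sq_le_right hx)
      _ = ∫ x in (0:ℝ)..(1/2), M^2 * Real.exp (-(16/δ^2) * x^2) := hcv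
      _ = M^2 * ∫ x in (0:ℝ)..(1/2), Real.exp (-(16/δ^2) * x^2) :=
          intervalIntegral.integral_const_mul _ _
      _ ≤ M^2 * (δ * Real.sqrt π / 8) :=
          mul_le_mul_of_nonneg_left (gauss_piece hδ) (sq_nonneg _)
  rw [hsplit]
  have : M^2 * (δ * Real.sqrt π / 8) + M^2 * (δ * Real.sqrt π / 8) = M^2 * (δ * Real.sqrt π / 4) := by ring
  linarith

theorem bump_exp_integral_ge {M δ : ℝ} (hδ : 0 < δ) (hδ1 : δ ≤ 1) (hM : 1 ≤ M) :
    δ/(π*Real.sqrt (2*M)) * Real.exp (M-1) ≤ ∫ x in (0:ℝ)..1, Real.exp (bump M δ x) := by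
  set ρ := δ/(π*Real.sqrt (2*M)) with hρdef
  have hsq : Real.sqrt (2*M) ^ 2 = 2*M := Real.sq_sqrt (by linarith)
  have hsqrt1 : 1 ≤ Real.sqrt (2*M) := by nlinarith [Real.sqrt_nonneg (2*M)]
  have hpi := Real.pi_gt_three
  have hden : 0 < π * Real.sqrt (2*M) := by nlinarith
  have hρpos : 0 < ρ := div_pos hδ hden
  have hρ1 : ρ ≤ 1 := by
    rw [hρdef, div_le_one hden]; nlinarith
  have hρsq : π^2 * ρ^2 = δ^2/(2*M) := by
    rw [hρdef, div_pow, mul_pow, hsq]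
    field_simp
  have hMpos : (0:ℝ) < M := by linarith
  have hlow : ∀ x ∈ Set.Icc (0:ℝ) ρ, M - 1 ≤ bump M δ x := by
    intro x ⟨hx0, hxρ⟩
    have hsnn : 0 ≤ Real.sin (π*x) :=
      Real.sin_nonneg_of_nonneg_of_le_pi (by positivity) (by nlinarith)
    have hsle : Real.sin (π*x) ≤ π * x := Real.sin_le (by positivity)
    have hπρ : Real.sin (π*x) ≤ π * ρ := le_trans hsle (by nlinarith)
    have hssq : Real.sin (π*x)^2 ≤ π^2 * ρ^2 := by nlinarith [mul_le_mul hπρ hπρ hsnn (by positivity : (0:ℝ) ≤ π * ρ)]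
    have harg : -(1/M) ≤ -2/δ^2 * Real.sin (π*x)^2 := by
      have h0 : (-2:ℝ)/δ^2 ≤ 0 := div_nonpos_of_nonpos_of_nonneg (by norm_num) (sq_nonneg δ)
      have := mul_le_mul_of_nonpos_left hssq h0
      have e : -2/δ^2 * (π^2 * ρ^2) = -(1/M) := by
        rw [hρsq]; field_simp
      linarith [e ▸ this]
    have hexp1 : Real.exp (-(1/M)) ≤ Real.exp (-2/δ^2 * Real.sin (π*x)^2) := Real.exp_le_exp.2 harg
    have hexp2 : 1 - 1/M ≤ Real.exp (-(1/M)) := by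
      have := Real.add_one_le_exp (-(1/M))
      linarith
    have : M * (1 - 1/M) ≤ bump M δ x := by
      rw [bump]
      exact mul_le_mul_of_nonneg_left (le_trans hexp2 hexp1) hMpos.le
    have e : M * (1 - 1/M) = M - 1 := by field_simp
    linarith [e ▸ this]
  have hce : Continuous fun x => Real.exp (bump M δ x) :=
    Real.continuous_exp.comp (bump_continuous M δ)
  have hsplit : ∫ x in (0:ℝ)..1, Real.exp (bump M δ x)
      = (∫ x in (0:ℝ)..ρ, Real.exp (bump M δ x)) + ∫ x in ρ..1, Real.exp (bump M δ x) :=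
    (intervalIntegral.integral_add_adjacent_intervals
      (hce.intervalIntegrable _ _) (hce.intervalIntegrable _ _)).symm
  have h1 : ρ * Real.exp (M-1) ≤ ∫ x in (0:ℝ)..ρ, Real.exp (bump M δ x) := by
    have : ∫ _x in (0:ℝ)..ρ, Real.exp (M-1) ≤ ∫ x in (0:ℝ)..ρ, Real.exp (bump M δ x) :=
      intervalIntegral.integral_mono_on hρpos.le intervalIntegrable_const
        (hce.intervalIntegrable _ _) (fun x hx => Real.exp_le_exp.2 (hlow x hx))
    simpa using this
  have h2 : 0 ≤ ∫ x in ρ..1, Real.exp (bump M δ x) :=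
    intervalIntegral.integral_nonneg hρ1 (fun x _ => (Real.exp_pos _).le)
  rw [hsplit]
  linarith
theorem bump_hasDerivAt (M δ : ℝ) (x : ℝ) : HasDerivAt (bump M δ)
    (M * (Real.exp (-2/δ^2 * Real.sin (π*x)^2) * ((-2/δ^2) * (2 * Real.sin (π*x) * (Real.cos (π*x) * π))))) x := by
  have h1 : HasDerivAt (fun x : ℝ => Real.sin (π*x)) (Real.cos (π*x) * π) x := by
    have h := (Real.hasDerivAt_sin (π*x)).comp x ((hasDerivAt_id x).const_mul π)
    simp only [id_eq, mul_one] at h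
    exact h
  have h2 : HasDerivAt (fun x : ℝ => (-2/δ^2) * Real.sin (π*x)^2)
      ((-2/δ^2) * (2 * Real.sin (π*x) * (Real.cos (π*x) * π))) x := by
    have := (h1.pow 2).const_mul (-2/δ^2)
    simpa [mul_comm, mul_assoc, pow_one] using this
  exact h2.exp.const_mul M

theorem bump_deriv (M δ : ℝ) (x : ℝ) : deriv (bump M δ) x =
    M * (Real.exp (-2/δ^2 * Real.sin (π*x)^2) * ((-2/δ^2) * (2 * Real.sin (π*x) * (Real.cos (π*x) * π)))) :=
  (bump_hasDerivAt M δ x).deriv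

theorem bump_deriv_sq_le {M δ : ℝ} (hδ : 0 < δ) (x : ℝ) :
    (deriv (bump M δ) x)^2 ≤ 16*π^2*M^2/δ^4 := by
  rw [bump_deriv]
  have key : (M * (Real.exp (-2/δ^2 * Real.sin (π*x)^2) * ((-2/δ^2) * (2 * Real.sin (π*x) * (Real.cos (π*x) * π)))))^2
      = 16*π^2*M^2/δ^4 * (Real.exp (-2/δ^2 * Real.sin (π*x)^2)^2 * (Real.sin (π*x)^2 * Real.cos (π*x)^2)) := by
    field_simp
    ring
  rw [key]
  have h1 : Real.exp (-2/δ^2 * Real.sin (π*x)^2) ≤ 1 := by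
    apply Real.exp_le_one_iff.2
    have : (-2:ℝ)/δ^2 ≤ 0 := div_nonpos_of_nonpos_of_nonneg (by norm_num) (sq_nonneg δ)
    exact mul_nonpos_of_nonpos_of_nonneg this (sq_nonneg _)
  have h2 : Real.exp (-2/δ^2 * Real.sin (π*x)^2)^2 * (Real.sin (π*x)^2 * Real.cos (π*x)^2) ≤ 1 := by
    have e1 := Real.exp_pos (-2/δ^2 * Real.sin (π*x)^2)
    have s1 := Real.sin_sq_le_one (π*x)
    have c1 := Real.cos_sq_le_one (π*x)
    have s0 := sq_nonneg (Real.sin (π*x))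
    have c0 := sq_nonneg (Real.cos (π*x))
    have e2 : Real.exp (-2/δ^2 * Real.sin (π*x)^2)^2 ≤ 1 := by nlinarith
    nlinarith [mul_nonneg s0 c0, mul_le_one₀ s1 c0 c1]
  calc 16*π^2*M^2/δ^4 * (Real.exp (-2/δ^2 * Real.sin (π*x)^2)^2 * (Real.sin (π*x)^2 * Real.cos (π*x)^2))
      ≤ 16*π^2*M^2/δ^4 * 1 := mul_le_mul_of_nonneg_left h2 (by positivity)
    _ = 16*π^2*M^2/δ^4 := mul_one _

theorem bump_integral_deriv_sq_le {M δ : ℝ} (hδ : 0 < δ) :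
    ∫ x in (0:ℝ)..1, (deriv (bump M δ) x)^2 ≤ 16*π^2*M^2/δ^4 := by
  have hcont : Continuous (deriv (bump M δ)) :=
    ((bump_contDiff M δ).continuous_deriv le_rfl)
  calc ∫ x in (0:ℝ)..1, (deriv (bump M δ) x)^2
      ≤ ∫ _x in (0:ℝ)..1, 16*π^2*M^2/δ^4 := by
        apply intervalIntegral.integral_mono_on (by norm_num)
          ((hcont.pow 2).intervalIntegrable 0 1)
          (intervalIntegrable_const)
        exact fun x _ => bump_deriv_sq_le hδ x
    _ = 16*π^2*M^2/δ^4 := by simp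



theorem num_sqrt_pi_le_two : Real.sqrt π ≤ 2 := by
  nlinarith [Real.sq_sqrt Real.pi_pos.le, Real.sqrt_nonneg π, Real.pi_le_four]

theorem num_sqrt_two_le : Real.sqrt 2 ≤ 3/2 := by
  nlinarith [Real.sq_sqrt (by norm_num : (0:ℝ) ≤ 2), Real.sqrt_nonneg 2]

theorem num_pi_sq_lt_ten : π^2 < 10 := by
  nlinarith [Real.pi_lt_d2, Real.pi_gt_three]

theorem num_sqrt100 : Real.sqrt 100 = 10 := by
  rw [show (100:ℝ) = 10^2 by norm_num, Real.sqrt_sq (by norm_num : (0:ℝ) ≤ 10)]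

theorem num_pi_sqrt_two_le : π * Real.sqrt 2 ≤ 6 := by
  have h := mul_le_mul Real.pi_le_four num_sqrt_two_le (Real.sqrt_nonneg 2)
    (by norm_num : (0:ℝ) ≤ 4)
  linarith

set_option maxHeartbeats 1000000 in
theorem stmt6 (κ : ℝ) (hκ : 0 < κ) :
    ∃ Dmin : ℝ, 0 < Dmin ∧ ∀ D : ℝ, 0 < D → D < Dmin →
      J D κ (fun _ => κ) = -κ ^ 2 / 2 ∧
      ∃ u : ℝ → ℝ, W12 u ∧ J D κ u < -κ ^ 2 / 2 := by
  have hκne : κ ≠ 0 := ne_of_gt hκ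
  obtain ⟨M, hMdef⟩ : ∃ m : ℝ, m = 100 + 3*κ + 2/κ := ⟨_, rfl⟩
  have h3κ : 0 < 3*κ := by positivity
  have h2κ0 : 0 < 2/κ := by positivity
  have hM100 : (100:ℝ) ≤ M := by rw [hMdef]; linarith
  have hMpos : (0:ℝ) < M := by linarith
  have hMne : M ≠ 0 := ne_of_gt hMpos
  have hM1 : (1:ℝ) ≤ M := by linarith
  have hκM : κ ≤ M := by rw [hMdef]; linarith
  have h2κ : 2/κ ≤ M := by rw [hMdef]; linarith
  have h1κ : 1/κ ≤ M/2 := by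
    have e : (1:ℝ)/κ = (2/κ)/2 := by ring
    linarith
  obtain ⟨δ, hδdef⟩ : ∃ d : ℝ, d = κ/M^2 := ⟨_, rfl⟩
  have hδpos : 0 < δ := by rw [hδdef]; positivity
  have hδne : δ ≠ 0 := ne_of_gt hδpos
  have hδ1 : δ ≤ 1 := by
    rw [hδdef, div_le_one (by positivity)]
    linarith [mul_nonneg (by linarith : (0:ℝ) ≤ M) (by linarith : (0:ℝ) ≤ M - 1), hκM]
  obtain ⟨Dmin, hDmindef⟩ : ∃ d : ℝ, d = δ^4/(200*M^2) := ⟨_, rfl⟩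
  have hDminpos : 0 < Dmin := by rw [hDmindef]; positivity
  refine ⟨Dmin, hDminpos, fun D hD0 hDmin =>
    ⟨J_const D κ, bump M δ, ⟨bump_contDiff M δ, bump_periodic M δ⟩, ?_⟩⟩
  obtain ⟨IA, hIA⟩ : ∃ r : ℝ, r = ∫ x in (0:ℝ)..1, (deriv (bump M δ) x)^2 := ⟨_, rfl⟩
  obtain ⟨IB, hIB⟩ : ∃ r : ℝ, r = ∫ x in (0:ℝ)..1, (bump M δ x)^2 := ⟨_, rfl⟩
  obtain ⟨IC, hIC⟩ : ∃ r : ℝ, r = ∫ x in (0:ℝ)..1, Real.exp (bump M δ x) := ⟨_, rfl⟩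
  have hJ : J D κ (bump M δ) = (D/2)*IA + (1/2)*IB - κ * Real.log IC := by
    rw [hIA, hIB, hIC]; rfl
  -- derivative term
  have hbound : (0:ℝ) < 16*π^2*M^2/δ^4 := by positivity
  have hA : (D/2)*IA < π^2/25 := by
    have h0 : IA ≤ 16*π^2*M^2/δ^4 := by
      rw [hIA]; exact bump_integral_deriv_sq_le hδpos
    have h1 : (D/2)*IA ≤ (D/2)*(16*π^2*M^2/δ^4) :=
      mul_le_mul_of_nonneg_left h0 (by linarith)
    have h2 : (D/2)*(16*π^2*M^2/δ^4) < (Dmin/2)*(16*π^2*M^2/δ^4) := by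
      apply mul_lt_mul_of_pos_right _ hbound
      linarith
    have h3 : (Dmin/2)*(16*π^2*M^2/δ^4) = π^2/25 := by
      rw [hDmindef]; field_simp; ring
    linarith
  -- L² term
  have hMδ : M^2 * δ = κ := by rw [hδdef]; field_simp
  have hsqrtπ : Real.sqrt π ≤ 2 := num_sqrt_pi_le_two
  have hB : (1/2)*IB ≤ κ/4 := by
    have h1 : IB ≤ M^2 * (δ * Real.sqrt π / 4) := by
      rw [hIB]; exact bump_integral_sq_le hδpos
    have h2 : M^2 * (δ * Real.sqrt π / 4) = κ * Real.sqrt π / 4 := by rw [← hMδ]; ring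
    linarith [mul_nonneg hκ.le (by linarith : (0:ℝ) ≤ 2 - Real.sqrt π)]
  -- log term
  obtain ⟨ρ, hρdef⟩ : ∃ r : ℝ, r = δ/(π*Real.sqrt (2*M)) := ⟨_, rfl⟩
  have hsq2M : Real.sqrt (2*M) ^ 2 = 2*M := Real.sq_sqrt (by linarith)
  have hsqrt2M0 : 0 ≤ Real.sqrt (2*M) := Real.sqrt_nonneg _
  have hsqrt2M1 : 1 ≤ Real.sqrt (2*M) := by
    rw [← Real.sqrt_one]
    exact Real.sqrt_le_sqrt (by linarith)
  have hsqrt2Mne : Real.sqrt (2*M) ≠ 0 := by intro h; rw [h] at hsqrt2M1; linarith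
  have hpi3 := Real.pi_gt_three
  have hρpos : 0 < ρ := by
    rw [hρdef]
    apply div_pos hδpos
    have : 0 < Real.sqrt (2*M) := by linarith
    positivity
  have hC : ρ * Real.exp (M-1) ≤ IC := by
    rw [hρdef, hIC]; exact bump_exp_integral_ge hδpos hδ1 hM1
  obtain ⟨s, hsdef⟩ : ∃ t : ℝ, t = Real.sqrt M := ⟨_, rfl⟩
  have hs2 : s^2 = M := by rw [hsdef]; exact Real.sq_sqrt (by linarith)
  have hs0 : 0 ≤ s := by rw [hsdef]; exact Real.sqrt_nonneg M
  have hs10 : 10 ≤ s := by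
    rw [hsdef, ← num_sqrt100]
    exact Real.sqrt_le_sqrt (by linarith)
  have hsqrt2 : Real.sqrt 2 ≤ 3/2 := num_sqrt_two_le
  have hsqrt2' : 0 ≤ Real.sqrt 2 := Real.sqrt_nonneg 2
  have hρinv : ρ⁻¹ ≤ M^4 := by
    have e1 : ρ⁻¹ = π * Real.sqrt (2*M) * M^2 * (1/κ) := by
      rw [hρdef, hδdef]
      field_simp
    have e2 : Real.sqrt (2*M) = Real.sqrt 2 * s := by
      rw [hsdef, ← Real.sqrt_mul (by norm_num)]
    have b1 : π * Real.sqrt (2*M) ≤ 6*s := by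
      rw [e2]
      linarith [mul_le_mul_of_nonneg_right num_pi_sqrt_two_le hs0,
        mul_nonneg (by linarith [num_pi_sqrt_two_le] : (0:ℝ) ≤ 6 - π * Real.sqrt 2) hs0]
    have b2 : π * Real.sqrt (2*M) * M^2 * (1/κ) ≤ 6*s * M^2 * (M/2) := by
      have p2 : 0 ≤ (1:ℝ)/κ := by positivity
      calc π * Real.sqrt (2*M) * M^2 * (1/κ)
          ≤ 6*s * M^2 * (1/κ) := by
            apply mul_le_mul_of_nonneg_right _ p2
            exact mul_le_mul_of_nonneg_right b1 (sq_nonneg M)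
        _ ≤ 6*s * M^2 * (M/2) := by
            apply mul_le_mul_of_nonneg_left h1κ
            positivity
    have hM4 : M^4 = s^2 * M^3 := by rw [hs2]; ring
    have b3 : (0:ℝ) ≤ (s - 3) * s * M^3 :=
      mul_nonneg (mul_nonneg (by linarith) hs0) (by positivity)
    rw [e1]
    linarith [b2, b3, hM4]
  have hlogρ : -Real.log ρ ≤ 4/5 * M := by
    have l1 : -Real.log ρ = Real.log ρ⁻¹ := (Real.log_inv ρ).symm
    have l2 : Real.log ρ⁻¹ ≤ Real.log (M^4) :=
      Real.log_le_log (by positivity) hρinv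
    have l3 : Real.log (M^4) = 4 * Real.log M := by
      rw [show (M:ℝ)^4 = M^(4:ℕ) by norm_num, Real.log_pow]
      norm_num
    have l4 : Real.log s = Real.log M / 2 := by
      rw [hsdef]; exact Real.log_sqrt (by linarith)
    have l5 : Real.log s ≤ s - 1 := Real.log_le_sub_one_of_pos (by linarith)
    have l6 : 8*s ≤ 4/5 * M := by
      linarith [mul_nonneg (by linarith : (0:ℝ) ≤ s - 10) hs0, hs2]
    rw [l1]
    calc Real.log ρ⁻¹ ≤ 4 * Real.log M := l2.trans (le_of_eq l3)
      _ = 8 * Real.log s := by rw [l4]; ring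
      _ ≤ 8 * (s-1) := by linarith
      _ ≤ 4/5 * M := by linarith
  have hlogC : κ * ((M-1) - 4/5*M) ≤ κ * Real.log IC := by
    apply mul_le_mul_of_nonneg_left _ hκ.le
    have l1 : Real.log (ρ * Real.exp (M-1)) ≤ Real.log IC :=
      Real.log_le_log (by positivity) hC
    have l2 : Real.log (ρ * Real.exp (M-1)) = Real.log ρ + (M-1) := by
      rw [Real.log_mul (ne_of_gt hρpos) (Real.exp_ne_zero _), Real.log_exp]
    linarith
  -- final arithmetic
  have hκM2 : κ * M = 100*κ + 3*κ^2 + 2 := by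
    rw [hMdef]; field_simp
  have hπ2 : π^2 < 10 := num_pi_sq_lt_ten
  rw [hJ]
  linarith [hA, hB, hlogC, hκM2, hπ2, sq_nonneg κ, hκ.le]
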